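/- Let V and A be finite sets with maps s, t : A → V such that the underlying graph is connected (the simple graph on V in which x ≠ y are adjacent iff some arrow a has {s(a), t(a)} = {x, y} is connected). Let ξ : A → ℝ satisfy ξ(a) > 0 for all a ∈ A, and define θ_ξ(v) = Σ_{a : t(a)=v} ξ(a) − Σ_{a : s(a)=v} ξ(a). Then for every nonempty proper subset S ⊊ V that is closed under arrows (i.e. for every a ∈ A, s(a) ∈ S implies t(a) ∈ S), one has Σ_{v ∈ S} θ_ξ(v) > 0. -/

import Mathlib

open Finset
open scoped Classical

/-- The underlying simple graph of a quiver `(V, A, s, t)`: distinct vertices `x, y`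
are adjacent iff some arrow joins them (in either direction). -/
def quiverGraph {V A : Type*} (s t : A → V) : SimpleGraph V where
  Adj x y := x ≠ y ∧ ∃ a : A, (s a = x ∧ t a = y) ∨ (s a = y ∧ t a = x)
  symm := by
    constructor
    rintro x y ⟨hxy, a, (⟨h1, h2⟩ | ⟨h1, h2⟩)⟩
    · exact ⟨hxy.symm, a, Or.inr ⟨h1, h2⟩⟩
    · exact ⟨hxy.symm, a, Or.inl ⟨h1, h2⟩⟩
  loopless := ⟨fun x h => h.1 rfl⟩

/-- For a finite quiver with connected underlying graph and positive weights
`ξ : A → ℝ` on the arrows, the stability parameter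
`θ_ξ(v) = Σ_{t(a)=v} ξ(a) − Σ_{s(a)=v} ξ(a)` is strictly positive when summed over any
nonempty proper subset `S ⊊ V` of vertices closed under the arrows. -/
theorem theta_pos_on_arrow_closed_subsets
    {V A : Type*} [Fintype V] [Fintype A]
    (s t : A → V)
    (hconn : (quiverGraph s t).Connected)
    (ξ : A → ℝ) (hξ : ∀ a : A, 0 < ξ a) :
    ∀ S : Finset V, S.Nonempty → S ≠ univ → (∀ a : A, s a ∈ S → t a ∈ S) →
      0 < ∑ v ∈ S, ((∑ a ∈ univ.filter (fun a => t a = v), ξ a) -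
          (∑ a ∈ univ.filter (fun a => s a = v), ξ a)) := by
  intro S hSne hSne' hclosed
  -- rewrite the sum as a sum over boundary arrows
  rw [Finset.sum_sub_distrib]
  have h1 : ∑ x ∈ S, ∑ a ∈ univ.filter (fun a => t a = x), ξ a
      = ∑ a ∈ univ.filter (fun a => t a ∈ S), ξ a := by
    convert Finset.sum_fiberwise_eq_sum_filter univ S t ξ using 2
  have h2 : ∑ x ∈ S, ∑ a ∈ univ.filter (fun a => s a = x), ξ a
      = ∑ a ∈ univ.filter (fun a => s a ∈ S), ξ a := by
    convert Finset.sum_fiberwise_eq_sum_filter univ S s ξ using 2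
  rw [h1, h2]
  have hsub : (univ.filter (fun a => s a ∈ S)) ⊆ (univ.filter (fun a => t a ∈ S)) := by
    intro a ha
    simp only [mem_filter, mem_univ, true_and] at ha ⊢
    exact hclosed a ha
  rw [← Finset.sum_sdiff hsub, add_sub_cancel_right]
  -- find a boundary arrow: t a ∈ S, s a ∉ S
  obtain ⟨u, hu⟩ := hSne
  obtain ⟨w, hw⟩ : ∃ w, w ∉ S := by
    by_contra h
    push_neg at h
    exact hSne' (eq_univ_iff_forall.mpr h)
  obtain ⟨a, hta, hsa⟩ : ∃ a : A, t a ∈ S ∧ s a ∉ S := by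
    obtain ⟨p⟩ := hconn u w
    induction p with
    | nil => exact absurd hu hw
    | @cons x y z hxy p ih =>
      by_cases hy : y ∈ S
      · exact ih hy hw
      · obtain ⟨_, a, (⟨h1, h2⟩ | ⟨h1, h2⟩)⟩ :=
          (show x ≠ y ∧ ∃ a : A, (s a = x ∧ t a = y) ∨ (s a = y ∧ t a = x) from hxy)
        · exact absurd (h2 ▸ hclosed a (h1.symm ▸ hu)) hy
        · exact ⟨a, h2.symm ▸ hu, h1.symm ▸ hy⟩
  have hamem : a ∈ (univ.filter (fun a => t a ∈ S)) \ (univ.filter (fun a => s a ∈ S)) := by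
    simp [hta, hsa]
  exact Finset.sum_pos' (fun b _ => (hξ b).le) ⟨a, hamem, hξ a⟩
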